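/- Let vmin, vmax be real numbers with 0 < vmin < vmax, let v0 be a nonzero complex number with θ = arg(v0), let φ = arccos(vmin/vmax), and let N ≥ 2 be a natural number. Define the partition angles ψ_k = θ − φ + 2kφ/N for k = 0, 1, …, N. Then the polyhedral voltage feasibility domain {v ∈ ℂ : Re(v · conj(v0)) ≥ vmin·|v0| and, for each k = 0, …, N−1, Re(v · exp(−i·(ψ_k + ψ_{k+1})/2)) ≤ vmax·cos(φ/N)} equals the convex hull of the N + 1 corner points {vmax·exp(i·ψ_k) : k = 0, 1, …, N}. (Consequently, a linear constraint in v holds on the polyhedral voltage domain if and only if it holds at these corner points.) -/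

import Mathlib

set_option maxHeartbeats 1000000
open Complex Real

lemma re_mul_exp (r x : ℝ) : ((r:ℂ) * Complex.exp ((x:ℂ) * Complex.I)).re = r * Real.cos x := by
  simp [Complex.mul_re, Complex.exp_ofReal_mul_I_re, Complex.exp_ofReal_mul_I_im]

lemma exp_comb (x y : ℝ) :
    Complex.exp ((x:ℂ) * Complex.I) * Complex.exp ((y:ℂ) * Complex.I)
      = Complex.exp ((((x+y):ℝ):ℂ) * Complex.I) := by
  rw [← Complex.exp_add]; push_cast; ring_nf

lemma conj_v0_eq (v0 : ℂ) (θ : ℝ) (hθ : θ = Complex.arg v0) :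
    (starRingEnd ℂ) v0 = ((‖v0‖ : ℝ):ℂ) * Complex.exp ((↑(-θ):ℂ) * Complex.I) := by
  have h := Complex.norm_mul_exp_arg_mul_I v0
  rw [← hθ] at h
  rw [← h, map_mul]
  congr 1
  · simp
  · rw [← Complex.exp_conj]
    congr 1
    simp [map_mul, Complex.conj_I]

lemma sin_comb (α β γ : ℝ) :
    Complex.sin ((γ : ℂ) - α) * Complex.exp ((β:ℂ) * Complex.I)
      = Complex.sin ((γ:ℂ) - β) * Complex.exp ((α:ℂ) * Complex.I)
        + Complex.sin ((β:ℂ) - α) * Complex.exp ((γ:ℂ) * Complex.I) := by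
  simp only [Complex.sin, Complex.exp_sub, Complex.exp_neg, sub_mul, neg_mul]
  have ha := Complex.exp_ne_zero ((α:ℂ) * Complex.I)
  have hb := Complex.exp_ne_zero ((β:ℂ) * Complex.I)
  have hc := Complex.exp_ne_zero ((γ:ℂ) * Complex.I)
  field_simp
  ring

lemma sin_comb' (α β γ : ℝ) :
    ((Real.sin (γ - α) : ℝ):ℂ) * Complex.exp ((β:ℂ) * Complex.I)
      = ((Real.sin (γ - β) : ℝ):ℂ) * Complex.exp ((α:ℂ) * Complex.I)
        + ((Real.sin (β - α) : ℝ):ℂ) * Complex.exp ((γ:ℂ) * Complex.I) := by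
  push_cast
  exact sin_comb α β γ

lemma key_trig (φ β ε : ℝ) (hε : 0 < ε) (hεφ : ε < φ) (hφβ : φ < β)
    (hβ : β < π/2) :
    Real.cos ε * Real.cos β < Real.cos φ * Real.cos (β - φ + ε) := by
  have c1 := Real.cos_sub φ (β - φ + ε)
  have c2 := Real.cos_add φ (β - φ + ε)
  have c3 := Real.cos_sub β ε
  have c4 := Real.cos_add β ε
  have e3 : φ + (β - φ + ε) = β + ε := by ring
  rw [e3] at c2
  have key : Real.cos (β - ε) < Real.cos (φ - (β - φ + ε)) := by
    have hy : β - ε ≤ π := by nlinarith [Real.pi_pos]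
    rcases le_or_gt 0 (φ - (β - φ + ε)) with h | h
    · exact Real.cos_lt_cos_of_nonneg_of_le_pi h hy (by linarith)
    · have heq : Real.cos (φ - (β - φ + ε)) = Real.cos (β + ε - 2*φ) := by
        rw [← Real.cos_neg (φ - (β - φ + ε))]; norm_num; ring_nf
      rw [heq]
      exact Real.cos_lt_cos_of_nonneg_of_le_pi (by linarith) hy (by linarith)
  linarith

lemma exp_cis (t : ℝ) : Complex.exp ((t:ℂ) * Complex.I)
    = ((Real.cos t : ℝ):ℂ) + ((Real.sin t : ℝ):ℂ) * Complex.I := by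
  rw [Complex.exp_mul_I]; push_cast; ring

lemma ABchord_aux (d X r : ℝ) :
    ((r * Real.sin (d - X)) + (r * Real.sin (d + X))) * Real.cos d
      = Real.sin (2*d) * (r * Real.cos X) := by
  rw [Real.sin_two_mul d, Real.sin_sub d X, Real.sin_add d X]; ring

lemma ABlower_aux (m d X r : ℝ) :
    Real.sin (2*d) * (r * Real.cos (X + m))
      = (r * Real.sin (d - X)) * Real.cos (m - d) + (r * Real.sin (d + X)) * Real.cos (m + d) := by
  rw [Real.sin_two_mul d, Real.sin_sub d X, Real.sin_add d X, Real.cos_sub m d,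
    Real.cos_add m d, Real.cos_add X m]; ring

lemma chord_contra (vmax r cphi cdel cbeta cx : ℝ) (hr : 0 < r)
    (hcphi : 0 < cphi) (hcdel : 0 < cdel)
    (hlow : vmax * cphi ≤ r * cbeta) (hch : r * cx ≤ vmax * cdel)
    (hkey : cdel * cbeta < cphi * cx) : False := by
  nlinarith [mul_lt_mul_of_pos_left hkey hr,
    mul_le_mul_of_nonneg_left hch (le_of_lt hcphi),
    mul_le_mul_of_nonneg_right hlow (le_of_lt hcdel)]

lemma ABpos_aux (A B c1 c2 s rc vmn : ℝ) (hA : 0 ≤ A) (hB : 0 ≤ B) (hc1 : c1 ≤ 1) (hc2 : c2 ≤ 1)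
    (hs : 0 < s) (hvmn : 0 < vmn) (hrc : vmn ≤ rc) (heq : s * rc = A * c1 + B * c2) :
    0 < A + B := by
  nlinarith

/-- The polyhedral voltage feasibility domain equals the convex hull of
its `N + 1` corner points `vmax · exp(i ψ_k)`, where `ψ_k = θ - φ + 2kφ/N`. -/
theorem polyhedral_voltage_domain_eq_convexHull_corners
    (vmin vmax : ℝ) (hmin : 0 < vmin) (hlt : vmin < vmax)
    (v0 : ℂ) (hv0 : v0 ≠ 0)
    (θ φ : ℝ) (hθ : θ = Complex.arg v0) (hφ : φ = Real.arccos (vmin / vmax))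
    (N : ℕ) (hN : 2 ≤ N)
    (ψ : ℕ → ℝ) (hψ : ∀ k, ψ k = θ - φ + 2 * (k : ℝ) * φ / N) :
    {v : ℂ | vmin * ‖v0‖ ≤ (v * (starRingEnd ℂ) v0).re
        ∧ ∀ k < N,
          (v * Complex.exp (-(((ψ k + ψ (k + 1)) / 2 : ℝ)) * Complex.I)).re
            ≤ vmax * Real.cos (φ / N)}
      = convexHull ℝ
          {v : ℂ | ∃ k ≤ N, v = (vmax : ℂ) * Complex.exp (ψ k * Complex.I)} := by
  -- basic facts
  have hvmax : 0 < vmax := lt_trans hmin hlt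
  have hNR : (2:ℝ) ≤ (N:ℝ) := by exact_mod_cast hN
  have hN0 : (0:ℝ) < (N:ℝ) := by linarith
  have hr0 : 0 < vmin / vmax := div_pos hmin hvmax
  have hr1 : vmin / vmax < 1 := (div_lt_one hvmax).2 hlt
  have hφ0 : 0 < φ := hφ ▸ Real.arccos_pos.2 hr1
  have hφ2 : φ < π/2 := hφ ▸ Real.arccos_lt_pi_div_two.2 hr0
  have hπ : 0 < π := Real.pi_pos
  have hcosφ : Real.cos φ = vmin / vmax := by
    rw [hφ]; exact Real.cos_arccos (by linarith) (le_of_lt hr1)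
  have hvminφ : vmin = vmax * Real.cos φ := by rw [hcosφ]; field_simp
  have hsinφ : 0 < Real.sin φ := Real.sin_pos_of_pos_of_lt_pi hφ0 (by linarith)
  have habs0 : 0 < ‖v0‖ := norm_pos_iff.mpr hv0
  have hconj := conj_v0_eq v0 θ hθ
  apply Set.Subset.antisymm
  · -- hard direction: S ⊆ convexHull
    intro v hv
    simp only [Set.mem_setOf_eq] at hv
    obtain ⟨h1, h2⟩ := hv
    set C : Set ℂ := {v : ℂ | ∃ k ≤ N, v = (vmax : ℂ) * Complex.exp ((ψ k : ℂ) * Complex.I)}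
      with hCdef
    -- rotate to reference frame of v0
    set w : ℂ := v * Complex.exp ((↑(-θ):ℂ) * Complex.I) with hwdef
    have hvw : v = w * Complex.exp ((θ:ℂ) * Complex.I) := by
      have e : Complex.exp ((↑(-θ):ℂ) * Complex.I) * Complex.exp ((θ:ℂ) * Complex.I) = 1 := by
        rw [exp_comb]; norm_num
      rw [hwdef, mul_assoc, e, mul_one]
    have hwre : vmin ≤ w.re := by
      have e : v * (starRingEnd ℂ) v0 = ((‖v0‖ :ℝ):ℂ) * w := by
        rw [hconj, hwdef]; ring
      rw [e] at h1
      have e2 : (((‖v0‖:ℝ):ℂ) * w).re = ‖v0‖ * w.re := by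
        simp [Complex.mul_re]
      rw [e2] at h1
      nlinarith
    have hw0 : w ≠ 0 := by
      intro h; rw [h] at hwre; simp at hwre; linarith
    set β : ℝ := Complex.arg w with hβdef
    set r : ℝ := ‖w‖ with hrdef
    have hwpolar : (r:ℂ) * Complex.exp ((β:ℂ) * Complex.I) = w :=
      Complex.norm_mul_exp_arg_mul_I w
    have hr0 : 0 < r := by rw [hrdef]; exact norm_pos_iff.mpr hw0
    have hwrecos : w.re = r * Real.cos β := by rw [← hwpolar, re_mul_exp]
    have hβlt : |β| < π/2 :=
      Complex.abs_arg_lt_pi_div_two_iff.2 (Or.inl (lt_of_lt_of_le hmin hwre))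
    have hβ1 : -(π/2) < β := (abs_lt.1 hβlt).1
    have hβ2 : β < π/2 := (abs_lt.1 hβlt).2
    have hcosβ : 0 < Real.cos β := Real.cos_pos_of_mem_Ioo ⟨hβ1, hβ2⟩
    have hrcosβ : vmin ≤ r * Real.cos β := hwrecos ▸ hwre
    have hvpolar : v = (r:ℂ) * Complex.exp ((↑(β + θ):ℂ) * Complex.I) := by
      rw [hvw, ← hwpolar, mul_assoc, exp_comb]
    -- chord constraints in polar form
    have hchord : ∀ k < N, r * Real.cos (β + φ - (2*(k:ℝ)+1)*φ/N) ≤ vmax * Real.cos (φ/N) := by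
      intro k hk
      have h := h2 k hk
      have e : v * Complex.exp (-(((ψ k + ψ (k + 1)) / 2 : ℝ) : ℂ) * Complex.I)
          = (r:ℂ) * Complex.exp ((↑(β + θ + -((ψ k + ψ (k+1))/2)):ℂ) * Complex.I) := by
        rw [hvpolar, mul_assoc, show (-(((ψ k + ψ (k + 1)) / 2 : ℝ):ℂ)) * Complex.I
            = ((↑(-((ψ k + ψ (k+1))/2)):ℂ) * Complex.I) by push_cast; ring, exp_comb]
      rw [e, re_mul_exp] at h
      have e2 : β + θ + -((ψ k + ψ (k+1))/2) = β + φ - (2*(k:ℝ)+1)*φ/N := by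
        rw [hψ k, hψ (k+1)]; push_cast; field_simp; ring
      rw [e2] at h
      exact h
    have hδ0 : 0 < φ/N := by positivity
    have hδφ : φ/N < φ := by
      rw [div_lt_iff₀ hN0]
      have h1 : φ * 1 < φ * N := by
        apply mul_lt_mul_of_pos_left _ hφ0; linarith
      linarith
    have hcosδpos : 0 < Real.cos (φ/N) := Real.cos_pos_of_mem_Ioo ⟨by linarith, by linarith⟩
    have hcosφpos : 0 < Real.cos φ := Real.cos_pos_of_mem_Ioo ⟨by linarith, by linarith⟩
    -- Step 1 : |β| ≤ φ
    have hβφ : |β| ≤ φ := by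
      rw [abs_le]
      constructor
      · by_contra hcon
        push_neg at hcon
        have hch := hchord 0 (by omega)
        have e : β + φ - (2*((0:ℕ):ℝ)+1)*φ/N = β + φ - φ/N := by norm_num
        rw [e] at hch
        have hkey := key_trig φ (-β) (φ/N) hδ0 hδφ (by linarith) (by linarith)
        rw [show -β - φ + φ/N = -(β + φ - φ/N) by ring, Real.cos_neg, Real.cos_neg] at hkey
        exact chord_contra vmax r (Real.cos φ) (Real.cos (φ/N)) (Real.cos β)
          (Real.cos (β + φ - φ/N)) hr0 hcosφpos hcosδpos (by rw [← hvminφ]; exact hrcosβ) hch hkey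
      · by_contra hcon
        push_neg at hcon
        have hch := hchord (N-1) (by omega)
        have e : β + φ - (2*(((N-1):ℕ):ℝ)+1)*φ/N = β - φ + φ/N := by
          rw [Nat.cast_sub (by omega : 1 ≤ N)]
          push_cast
          field_simp
          ring
        rw [e] at hch
        have hkey := key_trig φ β (φ/N) hδ0 hδφ hcon hβ2
        exact chord_contra vmax r (Real.cos φ) (Real.cos (φ/N)) (Real.cos β)
          (Real.cos (β - φ + φ/N)) hr0 hcosφpos hcosδpos (by rw [← hvminφ]; exact hrcosβ) hch hkey
    -- Step 2 : locate the sector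
    set T : ℝ := (β + φ) * N / (2*φ) with hTdef
    have hT0 : 0 ≤ T := by
      apply div_nonneg _ (by linarith)
      have h1 := (abs_le.1 hβφ).1
      exact mul_nonneg (by linarith) (le_of_lt hN0)
    set k : ℕ := min (N-1) ⌊T⌋₊ with hkdef
    have hkN : k < N := lt_of_le_of_lt (min_le_left _ _) (by omega)
    have hkle : (k:ℝ) * (2*φ) ≤ (β+φ) * N := by
      have h1 : (k:ℝ) ≤ (⌊T⌋₊:ℝ) := by
        have : k ≤ ⌊T⌋₊ := min_le_right _ _
        exact_mod_cast this
      have h2 : (⌊T⌋₊:ℝ) ≤ T := Nat.floor_le hT0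
      have h3 : (k:ℝ) ≤ T := le_trans h1 h2
      rw [hTdef, le_div_iff₀ (by linarith : (0:ℝ) < 2*φ)] at h3
      exact h3
    have hkge : (β+φ) * N ≤ ((k:ℝ)+1) * (2*φ) := by
      rcases le_or_gt (⌊T⌋₊) (N-1) with h | h
      · have hk' : k = ⌊T⌋₊ := min_eq_right h
        have h2 : T < (⌊T⌋₊:ℝ) + 1 := Nat.lt_floor_add_one T
        rw [hTdef, div_lt_iff₀ (by linarith : (0:ℝ) < 2*φ)] at h2
        rw [hk']
        exact le_of_lt h2
      · have hk' : k = N-1 := min_eq_left (le_of_lt h)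
        have hcast : ((k:ℝ)+1) = N := by
          rw [hk', Nat.cast_sub (by omega : 1 ≤ N)]; push_cast; ring
        rw [hcast]
        have h1 := (abs_le.1 hβφ).2
        have h2 := mul_le_mul_of_nonneg_right (show β + φ ≤ 2*φ by linarith) (le_of_lt hN0)
        linarith
    set δ : ℝ := φ/N with hδdef
    set m : ℝ := -φ + (2*(k:ℝ)+1)*φ/N with hmdef
    have hβlow : m - δ ≤ β := by
      rw [hmdef, hδdef]
      have h : 2*(k:ℝ)*φ/N ≤ β + φ := by
        rw [div_le_iff₀ hN0]; linarith [hkle]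
      have h2 : (2*(k:ℝ)+1)*φ/N - φ/N = 2*(k:ℝ)*φ/N := by ring
      linarith [h2.le, h2.ge]
    have hβhigh : β ≤ m + δ := by
      rw [hmdef, hδdef]
      have h : β + φ ≤ (2*(k:ℝ)+2)*φ/N := by
        rw [le_div_iff₀ hN0]; linarith [hkge]
      have h2 : (2*(k:ℝ)+1)*φ/N + φ/N = (2*(k:ℝ)+2)*φ/N := by ring
      linarith [h2.le, h2.ge]
    set X : ℝ := β - m with hXdef
    have hX1 : -δ ≤ X := by rw [hXdef]; linarith
    have hX2 : X ≤ δ := by rw [hXdef]; linarith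
    have hδπ2 : δ < π/2 := by rw [hδdef]; linarith
    have hδpos : 0 < δ := by rw [hδdef]; exact hδ0
    have hsinδ2 : 0 < Real.sin (2*δ) :=
      Real.sin_pos_of_pos_of_lt_pi (by linarith) (by linarith)
    set A : ℝ := r * Real.sin (δ - X) with hAdef
    set B : ℝ := r * Real.sin (δ + X) with hBdef
    have hA0 : 0 ≤ A := mul_nonneg (le_of_lt hr0)
      (Real.sin_nonneg_of_nonneg_of_le_pi (by linarith) (by linarith))
    have hB0 : 0 ≤ B := mul_nonneg (le_of_lt hr0)
      (Real.sin_nonneg_of_nonneg_of_le_pi (by linarith) (by linarith))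
    have hψk : ψ k = θ + m - δ := by rw [hψ k, hmdef, hδdef]; ring
    have hψk1 : ψ (k+1) = θ + (m + δ) := by rw [hψ (k+1), hmdef, hδdef]; push_cast; ring
    -- the two-corner combination
    have hvcomb : ((Real.sin (2*δ) : ℝ):ℂ) * v
        = ((A:ℝ):ℂ) * Complex.exp ((↑(ψ k):ℂ) * Complex.I)
          + ((B:ℝ):ℂ) * Complex.exp ((↑(ψ (k+1)):ℂ) * Complex.I) := by
      have hsc := sin_comb' (ψ k) (β + θ) (ψ (k+1))
      rw [show ψ (k+1) - ψ k = 2*δ by rw [hψk, hψk1]; ring,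
          show ψ (k+1) - (β + θ) = δ - X by rw [hψk1, hXdef]; ring,
          show (β + θ) - ψ k = δ + X by rw [hψk, hXdef]; ring] at hsc
      rw [hvpolar, hAdef, hBdef]
      push_cast at hsc ⊢
      linear_combination (r:ℂ) * hsc
    -- chord constraint controls A + B
    have hABchord : (A + B) * Real.cos δ = Real.sin (2*δ) * (r * Real.cos X) := by
      rw [hAdef, hBdef]; exact ABchord_aux δ X r
    have hchordk := hchord k hkN
    have hangle : β + φ - (2*(k:ℝ)+1)*φ/N = X := by rw [hXdef, hmdef]; ring
    rw [hangle] at hchordk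
    have hcosδ : 0 < Real.cos δ := Real.cos_pos_of_mem_Ioo ⟨by linarith, hδπ2⟩
    have hchordk' : r * Real.cos X ≤ vmax * Real.cos δ := by rw [hδdef]; exact hchordk
    have hABle : A + B ≤ vmax * Real.sin (2*δ) := by
      have h3 : (A+B) * Real.cos δ ≤ (vmax * Real.sin (2*δ)) * Real.cos δ := by
        rw [hABchord]
        linarith [mul_le_mul_of_nonneg_left hchordk' (le_of_lt hsinδ2)]
      exact le_of_mul_le_mul_right h3 hcosδ
    have hABlower : Real.sin (2*δ) * (r * Real.cos β) = A * Real.cos (m - δ) + B * Real.cos (m + δ) := by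
      have h := ABlower_aux m δ X r
      rw [show X + m = β by rw [hXdef]; ring] at h
      rw [hAdef, hBdef]
      exact h
    have hABpos : 0 < A + B :=
      ABpos_aux A B (Real.cos (m - δ)) (Real.cos (m + δ)) (Real.sin (2*δ)) (r * Real.cos β) vmin
        hA0 hB0 (Real.cos_le_one _) (Real.cos_le_one _) hsinδ2 hmin hrcosβ hABlower
    -- corner points
    have hψ0 : ψ 0 = θ - φ := by rw [hψ 0]; push_cast; ring
    have hψN : ψ N = θ + φ := by rw [hψ N]; field_simp; ring
    set P0 : ℂ := (vmax:ℂ) * Complex.exp ((↑(ψ 0):ℂ) * Complex.I) with hP0def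
    set PN : ℂ := (vmax:ℂ) * Complex.exp ((↑(ψ N):ℂ) * Complex.I) with hPNdef
    set Pk : ℂ := (vmax:ℂ) * Complex.exp ((↑(ψ k):ℂ) * Complex.I) with hPkdef
    set Pk1 : ℂ := (vmax:ℂ) * Complex.exp ((↑(ψ (k+1)):ℂ) * Complex.I) with hPk1def
    have hP0mem : P0 ∈ C := ⟨0, Nat.zero_le N, rfl⟩
    have hPNmem : PN ∈ C := ⟨N, le_refl N, rfl⟩
    have hPkmem : Pk ∈ C := ⟨k, le_of_lt hkN, rfl⟩
    have hPk1mem : Pk1 ∈ C := ⟨k+1, by omega, rfl⟩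
    -- the point p on the chord [Pk, Pk1]
    set p : ℂ := (A/(A+B)) • Pk + (B/(A+B)) • Pk1 with hpdef
    have hpmem : p ∈ convexHull ℝ C := by
      apply (convex_convexHull ℝ C).segment_subset
        (subset_convexHull ℝ C hPkmem) (subset_convexHull ℝ C hPk1mem)
      exact ⟨A/(A+B), B/(A+B), by positivity, by positivity,
        by field_simp, rfl⟩
    -- the point q on the chord [P0, PN]
    set y : ℝ := vmin * Real.sin β / Real.cos β with hydef
    have hsinφβ1 : 0 ≤ Real.sin (φ - β) := by
      apply Real.sin_nonneg_of_nonneg_of_le_pi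
      · have := (abs_le.1 hβφ).2; linarith
      · linarith
    have hsinφβ2 : 0 ≤ Real.sin (φ + β) := by
      apply Real.sin_nonneg_of_nonneg_of_le_pi
      · have := (abs_le.1 hβφ).1; linarith
      · linarith
    rw [Real.sin_sub] at hsinφβ1
    rw [Real.sin_add] at hsinφβ2
    have hyub : y ≤ vmax * Real.sin φ := by
      rw [hydef, div_le_iff₀ hcosβ, hvminφ]
      linarith [mul_nonneg (le_of_lt hvmax) hsinφβ1]
    have hylb : -(vmax * Real.sin φ) ≤ y := by
      rw [hydef, le_div_iff₀ hcosβ, hvminφ]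
      linarith [mul_nonneg (le_of_lt hvmax) hsinφβ2]
    set lam : ℝ := (vmax * Real.sin φ - y) / (2 * vmax * Real.sin φ) with hlamdef
    have hlam0 : 0 ≤ lam := by
      apply div_nonneg (by linarith) (by positivity)
    have hlam1 : lam ≤ 1 := by
      rw [hlamdef, div_le_one (by positivity)]
      linarith
    set q : ℂ := lam • P0 + (1 - lam) • PN with hqdef
    have hqmem : q ∈ convexHull ℝ C := by
      apply (convex_convexHull ℝ C).segment_subset
        (subset_convexHull ℝ C hP0mem) (subset_convexHull ℝ C hPNmem)
      exact ⟨lam, 1 - lam, hlam0, by linarith, by ring, rfl⟩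
    -- q is the scaled copy of v at radial coordinate vmin
    have hre : lam * (vmax * Real.cos (θ-φ)) + (1-lam) * (vmax * Real.cos (θ+φ))
        = vmin / (r*Real.cos β) * (r * Real.cos (β+θ)) := by
      rw [hlamdef, hydef, hvminφ, Real.cos_sub, Real.cos_add,
        show β+θ = θ+β by ring, Real.cos_add]
      field_simp
      ring
    have him : lam * (vmax * Real.sin (θ-φ)) + (1-lam) * (vmax * Real.sin (θ+φ))
        = vmin / (r*Real.cos β) * (r * Real.sin (β+θ)) := by
      rw [hlamdef, hydef, hvminφ, Real.sin_sub, Real.sin_add,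
        show β+θ = θ+β by ring, Real.sin_add]
      field_simp
      ring
    have hqv : q = (vmin / (r * Real.cos β)) • v := by
      rw [hqdef, hP0def, hPNdef, hψ0, hψN, hvpolar,
        Complex.real_smul, Complex.real_smul, Complex.real_smul]
      apply Complex.ext
      · simp only [Complex.add_re, Complex.mul_re, Complex.ofReal_re, Complex.ofReal_im,
          Complex.exp_ofReal_mul_I_re, Complex.exp_ofReal_mul_I_im, Complex.mul_im,
          Complex.add_im]
        linear_combination hre
      · simp only [Complex.add_re, Complex.mul_re, Complex.ofReal_re, Complex.ofReal_im,
          Complex.exp_ofReal_mul_I_re, Complex.exp_ofReal_mul_I_im, Complex.mul_im,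
          Complex.add_im]
        linear_combination him
    -- v = s • p
    set s : ℝ := (A+B) / (vmax * Real.sin (2*δ)) with hsdef
    have hs0 : 0 < s := div_pos hABpos (by positivity)
    have hs1 : s ≤ 1 := by
      rw [hsdef, div_le_one (by positivity)]
      linarith
    have hvsp : v = s • p := by
      have hpos : (0:ℝ) < vmax * Real.sin (2*δ) := by positivity
      apply smul_right_injective ℂ (ne_of_gt hpos)
      show ((vmax * Real.sin (2*δ)):ℝ) • v = ((vmax * Real.sin (2*δ)):ℝ) • (s • p)
      have e1 : (vmax * Real.sin (2*δ)) * s = A + B := by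
        rw [hsdef]; field_simp
      have e2 : ((A+B):ℝ) • p = A • Pk + B • Pk1 := by
        rw [hpdef, smul_add, smul_smul, smul_smul]
        congr 2 <;> field_simp
      have e3 : ((vmax * Real.sin (2*δ)):ℝ) • v = A • Pk + B • Pk1 := by
        rw [Complex.real_smul]
        calc ((vmax * Real.sin (2*δ) : ℝ):ℂ) * v
            = (vmax:ℂ) * (((Real.sin (2*δ):ℝ):ℂ) * v) := by push_cast; ring
          _ = (vmax:ℂ) * (((A:ℝ):ℂ) * Complex.exp ((↑(ψ k):ℂ) * Complex.I)
                + ((B:ℝ):ℂ) * Complex.exp ((↑(ψ (k+1)):ℂ) * Complex.I)) := by rw [hvcomb]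
          _ = A • Pk + B • Pk1 := by
              rw [hPkdef, hPk1def, Complex.real_smul, Complex.real_smul]; ring
      rw [e3, smul_smul, e1, e2]
    -- combine
    rcases eq_or_lt_of_le hs1 with hseq | hslt
    · rw [hvsp, hseq, one_smul]; exact hpmem
    · set u : ℝ := vmin / (r * Real.cos β) * s with hudef
      have hrc0 : 0 < r * Real.cos β := by positivity
      have hu0 : 0 < u := by
        apply mul_pos (div_pos hmin hrc0) hs0
      have hus : u ≤ s := by
        rw [hudef]
        have hd : vmin/(r*Real.cos β) ≤ 1 := div_le_one_of_le₀ hrcosβ (le_of_lt hrc0)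
        linarith [mul_le_mul_of_nonneg_right hd (le_of_lt hs0)]
      have hu1 : u < 1 := lt_of_le_of_lt hus hslt
      have hqp : q = u • p := by
        rw [hqv, hvsp, smul_smul, hudef]
      set t : ℝ := (1 - s) / (1 - u) with htdef
      have ht0 : 0 ≤ t := div_nonneg (by linarith) (by linarith)
      have ht1 : t ≤ 1 := by
        rw [htdef, div_le_one (by linarith)]
        linarith
      apply (convex_convexHull ℝ C).segment_subset hqmem hpmem
      refine ⟨t, 1 - t, ht0, by linarith, by ring, ?_⟩
      rw [hqp, smul_smul, hvsp, ← add_smul]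
      congr 1
      have h1u : 1 - u ≠ 0 := by intro h; rw [sub_eq_zero] at h; exact (ne_of_lt hu1) h.symm
      rw [htdef]
      field_simp
      ring


  · -- convexHull ⊆ S
    apply convexHull_min
    · -- corners satisfy the constraints
      rintro v ⟨k, hkN, rfl⟩
      constructor
      · -- lower bound
        rw [hconj, show ((vmax:ℂ) * Complex.exp ((ψ k : ℂ) * Complex.I))
              * (((‖v0‖ : ℝ):ℂ) * Complex.exp ((↑(-θ):ℂ) * Complex.I))
            = ((vmax * ‖v0‖ : ℝ):ℂ)
              * (Complex.exp ((ψ k:ℂ) * Complex.I) * Complex.exp ((↑(-θ):ℂ) * Complex.I)) by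
            push_cast; ring, exp_comb, re_mul_exp]
        have harg : ψ k + -θ = -φ + 2*(k:ℝ)*φ/N := by rw [hψ k]; ring
        rw [harg]
        have habsle : |(-φ + 2*(k:ℝ)*φ/N)| ≤ φ := by
          have hk : (k:ℝ) ≤ (N:ℝ) := by exact_mod_cast hkN
          rw [abs_le]
          constructor
          · have : 0 ≤ 2*(k:ℝ)*φ/N := by positivity
            linarith
          · have h2 : 2*(k:ℝ)*φ/N ≤ 2*φ := by
              rw [div_le_iff₀ hN0]; nlinarith
            linarith
        have : Real.cos φ ≤ Real.cos (-φ + 2*(k:ℝ)*φ/N) := by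
          rw [← Real.cos_abs (-φ + 2*(k:ℝ)*φ/N)]
          exact Real.cos_le_cos_of_nonneg_of_le_pi (abs_nonneg _) (by linarith) habsle
        calc vmin * ‖v0‖ = (vmax * Real.cos φ) * ‖v0‖ := by rw [← hvminφ]
          _ ≤ (vmax * Real.cos (-φ + 2*(k:ℝ)*φ/N)) * ‖v0‖ := by
              apply mul_le_mul_of_nonneg_right _ (le_of_lt habs0)
              nlinarith
          _ = vmax * ‖v0‖ * Real.cos (-φ + 2*(k:ℝ)*φ/N) := by ring
      · -- chord constraints at corners
        intro j hjN
        rw [show (-(((ψ j + ψ (j + 1)) / 2 : ℝ) : ℂ)) * Complex.I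
              = ((↑(-((ψ j + ψ (j + 1)) / 2)):ℂ) * Complex.I) by push_cast; ring,
          show ((vmax:ℂ) * Complex.exp ((ψ k : ℂ) * Complex.I))
              * Complex.exp ((↑(-((ψ j + ψ (j + 1)) / 2)):ℂ) * Complex.I)
            = (vmax:ℂ) * (Complex.exp ((ψ k:ℂ) * Complex.I)
                * Complex.exp ((↑(-((ψ j + ψ (j + 1)) / 2)):ℂ) * Complex.I)) by ring,
          exp_comb, re_mul_exp]
        have harg : ψ k + -((ψ j + ψ (j+1))/2) = (2*(k:ℝ) - 2*(j:ℝ) - 1) * (φ/N) := by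
          rw [hψ k, hψ j, hψ (j+1)]; push_cast; field_simp; ring
        rw [harg]
        set D : ℝ := 2*(k:ℝ) - 2*(j:ℝ) - 1 with hD
        have hkR : (k:ℝ) ≤ N := by exact_mod_cast hkN
        have hjR : (j:ℝ) + 1 ≤ N := by exact_mod_cast hjN
        have hD1 : 1 ≤ |D| := by
          rcases le_or_gt (k:ℕ) j with h | h
          · have : (k:ℝ) ≤ (j:ℝ) := by exact_mod_cast h
            rw [_root_.abs_of_nonpos (by rw [hD]; linarith)]; rw [hD]; linarith
          · have : (j:ℝ) + 1 ≤ (k:ℝ) := by exact_mod_cast h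
            rw [_root_.abs_of_nonneg (by rw [hD]; linarith)]; rw [hD]; linarith
        have hD2 : |D| ≤ 2*(N:ℝ) - 1 := by
          rw [abs_le]; constructor <;> rw [hD] <;> [nlinarith; nlinarith]
        have hmono : Real.cos (D * (φ/N)) ≤ Real.cos (φ/N) := by
          rw [← Real.cos_abs (D * (φ/N)), abs_mul, _root_.abs_of_nonneg (by positivity : (0:ℝ) ≤ φ/N)]
          apply Real.cos_le_cos_of_nonneg_of_le_pi (by positivity)
          · calc |D| * (φ/N) ≤ (2*(N:ℝ) - 1) * (φ/N) := by
                  apply mul_le_mul_of_nonneg_right hD2 (by positivity)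
            _ ≤ π := by
                have h1 : (2*(N:ℝ)-1) * (φ/N) ≤ 2 * φ := by
                  rw [mul_div_assoc', div_le_iff₀ hN0]; nlinarith
                linarith
          · nlinarith [mul_le_mul_of_nonneg_right hD1 (by positivity : (0:ℝ) ≤ φ/N)]
        exact mul_le_mul_of_nonneg_left hmono (le_of_lt hvmax)
    · -- convexity
      intro x hx y hy a b ha hb hab
      obtain ⟨hx1, hx2⟩ := hx
      obtain ⟨hy1, hy2⟩ := hy
      constructor
      · have e : (a • x + b • y) * (starRingEnd ℂ) v0
            = (a:ℂ) * (x * (starRingEnd ℂ) v0) + (b:ℂ) * (y * (starRingEnd ℂ) v0) := by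
          rw [Complex.real_smul, Complex.real_smul]; ring
        rw [e, Complex.add_re]
        have e1 : ((a:ℂ) * (x * (starRingEnd ℂ) v0)).re = a * (x * (starRingEnd ℂ) v0).re := by
          simp [Complex.mul_re]
        have e2 : ((b:ℂ) * (y * (starRingEnd ℂ) v0)).re = b * (y * (starRingEnd ℂ) v0).re := by
          simp [Complex.mul_re]
        rw [e1, e2]
        have hsum : a * (vmin * ‖v0‖) + b * (vmin * ‖v0‖)
            = vmin * ‖v0‖ := by rw [← add_mul, hab, one_mul]
        linarith [mul_le_mul_of_nonneg_left hx1 ha, mul_le_mul_of_nonneg_left hy1 hb]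
      · intro k hk
        have e : (a • x + b • y) * Complex.exp ((-(((ψ k + ψ (k+1))/2 : ℝ)):ℂ) * Complex.I)
            = (a:ℂ) * (x * Complex.exp ((-(((ψ k + ψ (k+1))/2 : ℝ)):ℂ) * Complex.I))
              + (b:ℂ) * (y * Complex.exp ((-(((ψ k + ψ (k+1))/2 : ℝ)):ℂ) * Complex.I)) := by
          rw [Complex.real_smul, Complex.real_smul]; ring
        rw [e, Complex.add_re]
        have e1 : ∀ z : ℂ, ∀ c : ℝ, ((c:ℂ) * z).re = c * z.re := by intros; simp [Complex.mul_re]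
        rw [e1, e1]
        have hsum : a * (vmax * Real.cos (φ/N)) + b * (vmax * Real.cos (φ/N))
            = vmax * Real.cos (φ/N) := by rw [← add_mul, hab, one_mul]
        linarith [mul_le_mul_of_nonneg_left (hx2 k hk) ha, mul_le_mul_of_nonneg_left (hy2 k hk) hb]
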